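/- The eigenvalues of the preconditioned matrix A·Q₂⁻¹ belong to the set {1, −1, i, −i}. -/

import Mathlib

open Matrix Complex

/-- A 3×3 block matrix with blocks of sizes n, m, l. -/
def blk3 {n m l : ℕ}
    (M11 : Matrix (Fin n) (Fin n) ℝ) (M12 : Matrix (Fin n) (Fin m) ℝ) (M13 : Matrix (Fin n) (Fin l) ℝ)
    (M21 : Matrix (Fin m) (Fin n) ℝ) (M22 : Matrix (Fin m) (Fin m) ℝ) (M23 : Matrix (Fin m) (Fin l) ℝ)
    (M31 : Matrix (Fin l) (Fin n) ℝ) (M32 : Matrix (Fin l) (Fin m) ℝ) (M33 : Matrix (Fin l) (Fin l) ℝ) :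
    Matrix (Fin n ⊕ (Fin m ⊕ Fin l)) (Fin n ⊕ (Fin m ⊕ Fin l)) ℝ :=
  Matrix.fromBlocks M11
    (Matrix.of fun i j => Sum.elim (M12 i) (M13 i) j)
    (Matrix.of fun i j => Sum.elim (fun k => M21 k j) (fun k => M31 k j) i)
    (Matrix.fromBlocks M22 M23 M32 M33)

section Aux

lemma blk3_eq {n m l : ℕ}
    (M11 : Matrix (Fin n) (Fin n) ℝ) (M12 : Matrix (Fin n) (Fin m) ℝ) (M13 : Matrix (Fin n) (Fin l) ℝ)
    (M21 : Matrix (Fin m) (Fin n) ℝ) (M22 : Matrix (Fin m) (Fin m) ℝ) (M23 : Matrix (Fin m) (Fin l) ℝ)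
    (M31 : Matrix (Fin l) (Fin n) ℝ) (M32 : Matrix (Fin l) (Fin m) ℝ) (M33 : Matrix (Fin l) (Fin l) ℝ) :
    blk3 M11 M12 M13 M21 M22 M23 M31 M32 M33 =
      Matrix.fromBlocks M11 (Matrix.fromCols M12 M13) (Matrix.fromRows M21 M31)
        (Matrix.fromBlocks M22 M23 M32 M33) := by
  ext (i | i | i) (j | j | j) <;> rfl

lemma fromColumns_add' {R : Type*} [AddCommMonoid R] {p q r : Type*}
    (a : Matrix p q R) (b : Matrix p r R) (c : Matrix p q R) (d : Matrix p r R) :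
    Matrix.fromCols a b + Matrix.fromCols c d = Matrix.fromCols (a + c) (b + d) := by
  ext i (j | j) <;> simp

lemma fromRows_add' {R : Type*} [AddCommMonoid R] {p q r : Type*}
    (a : Matrix q p R) (b : Matrix r p R) (c : Matrix q p R) (d : Matrix r p R) :
    Matrix.fromRows a b + Matrix.fromRows c d = Matrix.fromRows (a + c) (b + d) := by
  ext (i | i) j <;> simp

lemma blk3_mul {n m l : ℕ}
    (A11 : Matrix (Fin n) (Fin n) ℝ) (A12 : Matrix (Fin n) (Fin m) ℝ) (A13 : Matrix (Fin n) (Fin l) ℝ)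
    (A21 : Matrix (Fin m) (Fin n) ℝ) (A22 : Matrix (Fin m) (Fin m) ℝ) (A23 : Matrix (Fin m) (Fin l) ℝ)
    (A31 : Matrix (Fin l) (Fin n) ℝ) (A32 : Matrix (Fin l) (Fin m) ℝ) (A33 : Matrix (Fin l) (Fin l) ℝ)
    (B11 : Matrix (Fin n) (Fin n) ℝ) (B12 : Matrix (Fin n) (Fin m) ℝ) (B13 : Matrix (Fin n) (Fin l) ℝ)
    (B21 : Matrix (Fin m) (Fin n) ℝ) (B22 : Matrix (Fin m) (Fin m) ℝ) (B23 : Matrix (Fin m) (Fin l) ℝ)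
    (B31 : Matrix (Fin l) (Fin n) ℝ) (B32 : Matrix (Fin l) (Fin m) ℝ) (B33 : Matrix (Fin l) (Fin l) ℝ) :
    blk3 A11 A12 A13 A21 A22 A23 A31 A32 A33 * blk3 B11 B12 B13 B21 B22 B23 B31 B32 B33 =
    blk3 (A11 * B11 + (A12 * B21 + A13 * B31)) (A11 * B12 + (A12 * B22 + A13 * B32))
         (A11 * B13 + (A12 * B23 + A13 * B33))
         (A21 * B11 + (A22 * B21 + A23 * B31)) (A21 * B12 + (A22 * B22 + A23 * B32))
         (A21 * B13 + (A22 * B23 + A23 * B33))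
         (A31 * B11 + (A32 * B21 + A33 * B31)) (A31 * B12 + (A32 * B22 + A33 * B32))
         (A31 * B13 + (A32 * B23 + A33 * B33)) := by
  simp only [blk3_eq, Matrix.fromBlocks_multiply, Matrix.fromCols_mul_fromRows,
    Matrix.mul_fromCols, Matrix.fromCols_mul_fromBlocks, Matrix.fromRows_mul,
    Matrix.fromBlocks_mul_fromRows, Matrix.fromRows_mul_fromCols, Matrix.fromCols_fromRows_eq_fromBlocks, fromColumns_add',
    fromRows_add', Matrix.fromBlocks_add]

lemma blk3_one {n m l : ℕ} :
    blk3 (1 : Matrix (Fin n) (Fin n) ℝ) 0 0 0 (1 : Matrix (Fin m) (Fin m) ℝ) 0 0 0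
      (1 : Matrix (Fin l) (Fin l) ℝ) = 1 := by
  rw [blk3_eq, Matrix.fromCols_zero, Matrix.fromRows_zero, Matrix.fromBlocks_one,
    Matrix.fromBlocks_one]

lemma blk3_congr {n m l : ℕ}
    {M11 N11 : Matrix (Fin n) (Fin n) ℝ} {M12 N12 : Matrix (Fin n) (Fin m) ℝ}
    {M13 N13 : Matrix (Fin n) (Fin l) ℝ}
    {M21 N21 : Matrix (Fin m) (Fin n) ℝ} {M22 N22 : Matrix (Fin m) (Fin m) ℝ}
    {M23 N23 : Matrix (Fin m) (Fin l) ℝ}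
    {M31 N31 : Matrix (Fin l) (Fin n) ℝ} {M32 N32 : Matrix (Fin l) (Fin m) ℝ}
    {M33 N33 : Matrix (Fin l) (Fin l) ℝ}
    (h11 : M11 = N11) (h12 : M12 = N12) (h13 : M13 = N13)
    (h21 : M21 = N21) (h22 : M22 = N22) (h23 : M23 = N23)
    (h31 : M31 = N31) (h32 : M32 = N32) (h33 : M33 = N33) :
    blk3 M11 M12 M13 M21 M22 M23 M31 M32 M33 = blk3 N11 N12 N13 N21 N22 N23 N31 N32 N33 := by
  subst h11 h12 h13 h21 h22 h23 h31 h32 h33; rfl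

lemma rows_injective {m n : ℕ} {B : Matrix (Fin m) (Fin n) ℝ} (hB : B.rank = m) :
    Function.Injective B.vecMul := by
  rw [Matrix.vecMul_injective_iff, linearIndependent_iff_card_eq_finrank_span]
  rw [Matrix.rank_eq_finrank_span_row] at hB
  simpa [Set.finrank] using hB.symm

lemma posDef_conj {m n : ℕ} {M : Matrix (Fin n) (Fin n) ℝ} (hM : M.PosDef)
    {B : Matrix (Fin m) (Fin n) ℝ} (hB : B.rank = m) : (B * M * Bᵀ).PosDef := by
  refine Matrix.PosDef.of_dotProduct_mulVec_pos ?_ ?_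
  · have h1 := hM.1
    rw [Matrix.IsHermitian, Matrix.conjTranspose_eq_transpose_of_trivial] at h1 ⊢
    rw [Matrix.transpose_mul, Matrix.transpose_mul, Matrix.transpose_transpose, h1,
      Matrix.mul_assoc]
  · intro x hx
    have hy : x ᵥ* B ≠ 0 := by
      intro h
      exact hx (rows_injective hB (by simpa using h))
    have h2 := hM.dotProduct_mulVec_pos hy
    simpa [Matrix.mul_assoc, ← Matrix.mulVec_mulVec, dotProduct_mulVec, star_trivial,
      Matrix.mulVec_transpose] using h2

end Aux

set_option maxHeartbeats 1000000 in
theorem stmt2 {n m l : ℕ} (A : Matrix (Fin n) (Fin n) ℝ) (B : Matrix (Fin m) (Fin n) ℝ)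
    (C : Matrix (Fin l) (Fin m) ℝ) (hA : A.PosDef) (hB : B.rank = m) (hC : C.rank = l)
    (S : Matrix (Fin m) (Fin m) ℝ) (hS : S = B * A⁻¹ * Bᵀ)
    (X : Matrix (Fin l) (Fin l) ℝ) (hX : X = C * S⁻¹ * Cᵀ)
    (𝒜 Q₂ : Matrix (Fin n ⊕ (Fin m ⊕ Fin l)) (Fin n ⊕ (Fin m ⊕ Fin l)) ℝ)
    (h𝒜 : 𝒜 = blk3 A Bᵀ 0 B 0 Cᵀ 0 C 0)
    (hQ : Q₂ = blk3 A Bᵀ 0 0 S Cᵀ 0 0 (-X)) :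
    ∀ μ ∈ spectrum ℂ ((𝒜 * Q₂⁻¹).map Complex.ofReal),
      μ = 1 ∨ μ = -1 ∨ μ = Complex.I ∨ μ = -Complex.I := by
  -- positive definiteness of Schur complements
  have hSpd : S.PosDef := hS ▸ posDef_conj hA.inv hB
  have hXpd : X.PosDef := hX ▸ posDef_conj hSpd.inv hC
  -- basic inverse identities
  have hA1 : A * A⁻¹ = 1 := Matrix.mul_nonsing_inv A ((Matrix.isUnit_iff_isUnit_det A).mp hA.isUnit)
  have hA2 : A⁻¹ * A = 1 := Matrix.nonsing_inv_mul A ((Matrix.isUnit_iff_isUnit_det A).mp hA.isUnit)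
  have hS1 : S * S⁻¹ = 1 :=
    Matrix.mul_nonsing_inv S ((Matrix.isUnit_iff_isUnit_det S).mp hSpd.isUnit)
  have hS2 : S⁻¹ * S = 1 :=
    Matrix.nonsing_inv_mul S ((Matrix.isUnit_iff_isUnit_det S).mp hSpd.isUnit)
  have hX1 : X * X⁻¹ = 1 :=
    Matrix.mul_nonsing_inv X ((Matrix.isUnit_iff_isUnit_det X).mp hXpd.isUnit)
  have hX2 : X⁻¹ * X = 1 :=
    Matrix.nonsing_inv_mul X ((Matrix.isUnit_iff_isUnit_det X).mp hXpd.isUnit)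
  -- cancellation lemmas
  have hAc : ∀ {p : Type} (M : Matrix (Fin n) p ℝ), A * (A⁻¹ * M) = M := fun M => by
    rw [← Matrix.mul_assoc, hA1, Matrix.one_mul]
  have hAci : ∀ {p : Type} (M : Matrix (Fin n) p ℝ), A⁻¹ * (A * M) = M := fun M => by
    rw [← Matrix.mul_assoc, hA2, Matrix.one_mul]
  have hSc : ∀ {p : Type} (M : Matrix (Fin m) p ℝ), S * (S⁻¹ * M) = M := fun M => by
    rw [← Matrix.mul_assoc, hS1, Matrix.one_mul]
  have hSci : ∀ {p : Type} (M : Matrix (Fin m) p ℝ), S⁻¹ * (S * M) = M := fun M => by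
    rw [← Matrix.mul_assoc, hS2, Matrix.one_mul]
  have hXc : ∀ {p : Type} (M : Matrix (Fin l) p ℝ), X * (X⁻¹ * M) = M := fun M => by
    rw [← Matrix.mul_assoc, hX1, Matrix.one_mul]
  have hXci : ∀ {p : Type} (M : Matrix (Fin l) p ℝ), X⁻¹ * (X * M) = M := fun M => by
    rw [← Matrix.mul_assoc, hX2, Matrix.one_mul]
  have hSd : ∀ {p : Type} (M : Matrix (Fin m) p ℝ), B * (A⁻¹ * (Bᵀ * M)) = S * M := fun M => by
    rw [hS]; simp only [Matrix.mul_assoc]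
  have hSd0 : B * (A⁻¹ * Bᵀ) = S := by rw [hS, Matrix.mul_assoc]
  have hXd : ∀ {p : Type} (M : Matrix (Fin l) p ℝ), C * (S⁻¹ * (Cᵀ * M)) = X * M := fun M => by
    rw [hX]; simp only [Matrix.mul_assoc]
  have hXd0 : C * (S⁻¹ * Cᵀ) = X := by rw [hX, Matrix.mul_assoc]
  -- the explicit inverse of Q₂
  set Qi : Matrix (Fin n ⊕ (Fin m ⊕ Fin l)) (Fin n ⊕ (Fin m ⊕ Fin l)) ℝ :=
    blk3 A⁻¹ (-(A⁻¹ * (Bᵀ * S⁻¹))) (-(A⁻¹ * (Bᵀ * (S⁻¹ * (Cᵀ * X⁻¹)))))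
      0 S⁻¹ (S⁻¹ * (Cᵀ * X⁻¹)) 0 0 (-X⁻¹) with hQi
  have e1 : Q₂ * Qi = 1 := by
    rw [hQ, hQi, blk3_mul, ← blk3_one]
    apply blk3_congr <;>
      simp [Matrix.mul_assoc, hAc, hAci, hSc, hSci, hXc, hXci, hSd, hSd0, hXd, hXd0,
        hA1, hA2, hS1, hS2, hX1, hX2, Matrix.smul_mul, Matrix.mul_smul, Matrix.add_mul, Matrix.mul_add, Matrix.sub_mul, Matrix.mul_sub, Matrix.neg_mul, Matrix.mul_neg]
  have hQinv : Q₂⁻¹ = Qi := Matrix.inv_eq_right_inv e1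
  set Z : Matrix (Fin n ⊕ (Fin m ⊕ Fin l)) (Fin n ⊕ (Fin m ⊕ Fin l)) ℝ :=
    blk3 1 0 0 (B * A⁻¹) (-1) (-(Cᵀ * X⁻¹) - Cᵀ * X⁻¹) 0 (C * S⁻¹) 1 with hZ
  have e2 : 𝒜 * Q₂⁻¹ = Z := by
    rw [h𝒜, hQinv, hQi, hZ, blk3_mul]
    apply blk3_congr <;>
      simp [Matrix.mul_assoc, hAc, hAci, hSc, hSci, hXc, hXci, hSd, hSd0, hXd, hXd0,
        hA1, hA2, hS1, hS2, hX1, hX2, Matrix.smul_mul, Matrix.mul_smul, Matrix.add_mul, Matrix.mul_add, Matrix.sub_mul, Matrix.mul_sub, Matrix.neg_mul, Matrix.mul_neg] <;>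
      abel
  set K : Matrix (Fin m) (Fin m) ℝ := Cᵀ * (X⁻¹ * (C * S⁻¹)) with hK
  have e3 : Z * Z = blk3 1 0 0 0 (1 - K - K) 0 (C * (S⁻¹ * (B * A⁻¹))) 0 (-1) := by
    rw [hZ, blk3_mul]
    apply blk3_congr <;>
      simp [hK, Matrix.mul_assoc, hAc, hAci, hSc, hSci, hXc, hXci, hSd, hSd0, hXd, hXd0,
        hA1, hA2, hS1, hS2, hX1, hX2, sub_eq_add_neg, Matrix.smul_mul, Matrix.mul_smul, Matrix.add_mul, Matrix.mul_add, Matrix.sub_mul, Matrix.mul_sub, Matrix.neg_mul, Matrix.mul_neg] <;>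
      abel
  have hKK : K * K = K := by
    rw [hK]
    simp only [Matrix.mul_assoc, hXd, hXci]
  have e4 : (Z * Z) * (Z * Z) = 1 := by
    rw [e3, blk3_mul, ← blk3_one]
    apply blk3_congr <;>
      simp [Matrix.mul_assoc, sub_mul, mul_sub, hKK, hAc, hAci, hSc, hSci, hXc, hXci,
        hSd, hSd0, hXd, hXd0, hA1, hA2, hS1, hS2, hX1, hX2, Matrix.smul_mul, Matrix.mul_smul, Matrix.add_mul, Matrix.mul_add, Matrix.sub_mul, Matrix.mul_sub, Matrix.neg_mul, Matrix.mul_neg] <;>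
      abel
  have e5 : (𝒜 * Q₂⁻¹) ^ 4 = 1 := by
    rw [show (4 : ℕ) = 2 * 2 from rfl, pow_mul, sq, sq, e2, e4]
  -- pass to ℂ
  intro μ hμ
  have hM4 : ((𝒜 * Q₂⁻¹).map Complex.ofReal) ^ 4 = 1 := by
    have : ((Complex.ofRealHom.mapMatrix (𝒜 * Q₂⁻¹) :
        Matrix (Fin n ⊕ (Fin m ⊕ Fin l)) (Fin n ⊕ (Fin m ⊕ Fin l)) ℂ)) ^ 4 = 1 := by
      rw [← map_pow, e5, _root_.map_one]
    rwa [RingHom.mapMatrix_apply, show ⇑Complex.ofRealHom = Complex.ofReal from rfl] at this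
  have key : μ ^ 4 = 1 := by
    by_contra hne
    have hmem : (Polynomial.eval μ (Polynomial.X ^ 4 - 1 : Polynomial ℂ)) ∈
        spectrum ℂ (Polynomial.aeval ((𝒜 * Q₂⁻¹).map Complex.ofReal)
          (Polynomial.X ^ 4 - 1 : Polynomial ℂ)) :=
      spectrum.subset_polynomial_aeval _ _ ⟨μ, hμ, rfl⟩
    rw [map_sub, map_pow, Polynomial.aeval_X, _root_.map_one, hM4, sub_self] at hmem
    simp only [Polynomial.eval_sub, Polynomial.eval_pow, Polynomial.eval_X,
      Polynomial.eval_one] at hmem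
    rw [spectrum.mem_iff, sub_zero] at hmem
    exact hmem (((isUnit_iff_ne_zero).mpr (sub_ne_zero.mpr hne)).map
      (algebraMap ℂ (Matrix (Fin n ⊕ (Fin m ⊕ Fin l)) (Fin n ⊕ (Fin m ⊕ Fin l)) ℂ)))
  have h2 : (μ - 1) * ((μ + 1) * ((μ - Complex.I) * (μ + Complex.I))) = 0 := by
    linear_combination key + (1 - μ ^ 2) * Complex.I_sq
  rcases mul_eq_zero.mp h2 with h | h
  · exact Or.inl (sub_eq_zero.mp h)
  rcases mul_eq_zero.mp h with h | h
  · exact Or.inr (Or.inl (eq_neg_of_add_eq_zero_left h))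
  rcases mul_eq_zero.mp h with h | h
  · exact Or.inr (Or.inr (Or.inl (sub_eq_zero.mp h)))
  · exact Or.inr (Or.inr (Or.inr (eq_neg_of_add_eq_zero_left h)))
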